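/- Let Π be a group generated by involutions and containing a subgroup K isomorphic to the Klein four-group. If Γ ≤ Π is a subgroup of index 4 without 2-torsion, then Γ is generated by elements of the form x·δ with x ∈ K and δ² = 1 (and hence Γ is normal in Π with quotient isomorphic to (ℤ/2ℤ)²). -/

import Mathlib

set_option maxRecDepth 100000 in
private lemma fin4_key : ∀ σ τ : Equiv.Perm (Fin 4),
    (σ * σ = 1 ∧ (σ = 1 ∨ ∀ x, σ x ≠ x)) →
    (τ * τ = 1 ∧ (τ = 1 ∨ ∀ x, τ x ≠ x)) →
    ((σ*τ) * (σ*τ) = 1 ∧ (σ*τ = 1 ∨ ∀ x, (σ*τ) x ≠ x)) := by decide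

private lemma W_mul {Q : Type*} (hQ : Nat.card Q = 4) {σ τ : Equiv.Perm Q}
    (hσ : σ * σ = 1 ∧ (σ = 1 ∨ ∀ x, σ x ≠ x))
    (hτ : τ * τ = 1 ∧ (τ = 1 ∨ ∀ x, τ x ≠ x)) :
    (σ*τ) * (σ*τ) = 1 ∧ (σ*τ = 1 ∨ ∀ x, (σ*τ) x ≠ x) := by
  have : Finite Q := Nat.finite_of_card_ne_zero (by omega)
  let e : Q ≃ Fin 4 := Finite.equivFinOfCardEq hQ
  have hmul : ∀ a b : Equiv.Perm Q,
      e.permCongr (a * b) = e.permCongr a * e.permCongr b := by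
    intro a b; ext x
    simp [Equiv.permCongr_apply, Equiv.Perm.mul_apply]
  have hone : ∀ a : Equiv.Perm Q, e.permCongr a = 1 ↔ a = 1 := by
    intro a
    constructor
    · intro h; ext y
      have := congrArg (fun f : Equiv.Perm (Fin 4) => e.symm (f (e y))) h
      simpa using this
    · rintro rfl; ext x; simp
  have hfix : ∀ (a : Equiv.Perm Q),
      ((a = 1 ∨ ∀ x, a x ≠ x) ↔ (e.permCongr a = 1 ∨ ∀ x, (e.permCongr a) x ≠ x)) := by
    intro a
    constructor
    · rintro (rfl | h)
      · left; exact (hone 1).mpr rfl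
      · right; intro x hx
        rw [Equiv.permCongr_apply] at hx
        exact h (e.symm x) (e.injective (by simpa using hx))
    · rintro (h | h)
      · left; exact (hone a).mp h
      · right; intro y hy
        exact h (e y) (by rw [Equiv.permCongr_apply]; simpa using congrArg e hy)
  have h1 : e.permCongr σ * e.permCongr σ = 1 ∧
      (e.permCongr σ = 1 ∨ ∀ x, (e.permCongr σ) x ≠ x) := by
    refine ⟨?_, (hfix σ).mp hσ.2⟩
    rw [← hmul, hσ.1, (hone 1).mpr rfl]
  have h2 : e.permCongr τ * e.permCongr τ = 1 ∧
      (e.permCongr τ = 1 ∨ ∀ x, (e.permCongr τ) x ≠ x) := by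
    refine ⟨?_, (hfix τ).mp hτ.2⟩
    rw [← hmul, hτ.1, (hone 1).mpr rfl]
  obtain ⟨ha, hb⟩ := fin4_key _ _ h1 h2
  rw [← hmul, ← hmul, hone] at ha
  refine ⟨ha, (hfix (σ * τ)).mpr ?_⟩
  rw [hmul]; exact hb

/-- Let `P` be a group generated by involutions and containing a
subgroup `K` isomorphic to the Klein four-group. If `Γ ≤ P` has index 4 and no
2-torsion, then `Γ` is generated by elements of the form `x·δ` with `x ∈ K` and
`δ² = 1`; hence `Γ` is normal in `P` with quotient isomorphic to `(ℤ/2ℤ)²`. -/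
theorem gen_of_index_four_no_two_torsion
    {P : Type*} [Group P]
    (hgenP : ∃ T : Set P, (∀ t ∈ T, t * t = 1) ∧ Subgroup.closure T = ⊤)
    (K Γ : Subgroup P)
    (hK : Nonempty (K ≃* Multiplicative (ZMod 2) × Multiplicative (ZMod 2)))
    (hidx : Γ.index = 4)
    (htor : ∀ g ∈ Γ, g * g = 1 → g = 1) :
    (∃ S : Set P,
      S ⊆ {g : P | ∃ x ∈ K, ∃ δ : P, δ * δ = 1 ∧ g = x * δ} ∧
      Subgroup.closure S = Γ) ∧
    Γ.Normal ∧
      ∃ φ : P →* Multiplicative (ZMod 2) × Multiplicative (ZMod 2),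
        Function.Surjective φ ∧ φ.ker = Γ := by
  obtain ⟨T, hT1, hT2⟩ := hgenP
  obtain ⟨eK⟩ := hK
  set M := Multiplicative (ZMod 2) × Multiplicative (ZMod 2) with hM
  have hMsq : ∀ m : M, m * m = 1 := by decide
  have hMcard : Nat.card M = 4 := by rw [Nat.card_eq_fintype_card]; rfl
  -- every element of K squares to 1
  have hKsq : ∀ k ∈ K, k * k = 1 := by
    intro k hk
    have h2 : (⟨k, hk⟩ : K) * ⟨k, hk⟩ = 1 :=
      eK.injective (by rw [map_mul, map_one]; exact hMsq _)
    exact congrArg Subtype.val h2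
  have hKcard : Nat.card K = 4 := by
    rw [Nat.card_congr eK.toEquiv]; exact hMcard
  -- the coset space
  have hQcard : Nat.card (P ⧸ Γ) = 4 := by
    rw [← Subgroup.index_eq_card]; exact hidx
  set A := MulAction.toPermHom P (P ⧸ Γ) with hA
  have hsmul : ∀ (g h : P), (A g) (QuotientGroup.mk h) = QuotientGroup.mk (g * h) := by
    intro g h; rfl
  have hWgen : ∀ t ∈ T, (A t = 1 ∨ ∀ x, (A t) x ≠ x) := by
    intro t ht
    by_cases hfp : ∃ x, (A t) x = x
    · left
      obtain ⟨x, hx⟩ := hfp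
      obtain ⟨g, rfl⟩ := QuotientGroup.mk_surjective x
      rw [hsmul] at hx
      rw [QuotientGroup.eq] at hx
      have htinv : t⁻¹ = t := inv_eq_of_mul_eq_one_right (hT1 t ht)
      have h2 : ((t * g)⁻¹ * g) * ((t * g)⁻¹ * g) = 1 := by
        have : ((t * g)⁻¹ * g) * ((t * g)⁻¹ * g) = g⁻¹ * (t⁻¹ * t⁻¹) * g := by group
        rw [this, htinv, hT1 t ht, mul_one, inv_mul_cancel]
      have h3 := htor _ hx h2
      have h4 : t = 1 := by
        have : g = t * g := by
          have := congrArg (fun z => (t * g) * z) h3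
          simpa [mul_assoc] using this.symm
        exact (right_eq_mul.mp this)
      rw [h4, map_one]
    · right
      push_neg at hfp
      exact hfp
  have hW : ∀ g : P, (A g) * (A g) = 1 ∧ (A g = 1 ∨ ∀ x, (A g) x ≠ x) := by
    intro g
    have hg : g ∈ Subgroup.closure T := by rw [hT2]; exact Subgroup.mem_top g
    induction hg using Subgroup.closure_induction with
    | mem t ht => exact ⟨by rw [← map_mul, hT1 t ht, map_one], hWgen t ht⟩
    | one => exact ⟨by rw [map_one, one_mul], Or.inl (map_one A)⟩
    | mul x y hx hy ihx ihy => 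
      rw [map_mul]
      exact W_mul hQcard ihx ihy
    | inv x hx ihx =>
      have : A x⁻¹ = A x := by
        rw [map_inv]
        exact inv_eq_of_mul_eq_one_right ihx.1
      rw [this]; exact ihx
  have hker : A.ker = Γ := by
    ext g
    constructor
    · intro hg
      rw [MonoidHom.mem_ker] at hg
      have : (A g) (QuotientGroup.mk 1) = QuotientGroup.mk 1 := by rw [hg]; rfl
      rw [hsmul, mul_one, QuotientGroup.eq] at this
      simpa using Γ.inv_mem this
    · intro hg
      rw [MonoidHom.mem_ker]
      have hfix : (A g) (QuotientGroup.mk 1) = QuotientGroup.mk 1 := by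
        rw [hsmul, mul_one, QuotientGroup.eq]
        simpa using Γ.inv_mem hg
      rcases (hW g).2 with h | h
      · exact h
      · exact absurd hfix (h _)
  have hnormal : Γ.Normal := hker ▸ A.normal_ker
  -- the quotient morphism
  have hRcard : Nat.card A.range = 4 := by
    rw [← Nat.card_congr (QuotientGroup.quotientKerEquivRange A).toEquiv, hker]
    exact hQcard
  have hRsq : ∀ x : A.range, x * x = 1 := by
    rintro ⟨-, g, rfl⟩
    exact Subtype.ext (hW g).1
  have hRfin : Finite A.range := Nat.finite_of_card_ne_zero (by omega)
  have hRexp : Monoid.exponent A.range = 2 := by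
    have hdvd : Monoid.exponent A.range ∣ 2 :=
      Monoid.exponent_dvd_of_forall_pow_eq_one (fun x => by rw [pow_two]; exact hRsq x)
    have hne : Monoid.exponent A.range ≠ 1 := by
      intro h
      obtain ⟨x, y, hxy⟩ := Finite.one_lt_card_iff_nontrivial.mp
        (show 1 < Nat.card A.range by omega)
      apply hxy
      have hx : x = 1 := by
        rw [← pow_one x, ← h]; exact Monoid.pow_exponent_eq_one x
      have hy : y = 1 := by
        rw [← pow_one y, ← h]; exact Monoid.pow_exponent_eq_one y
      rw [hx, hy]
    rcases (Nat.dvd_prime Nat.prime_two).mp hdvd with h | h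
    · exact absurd h hne
    · exact h
  haveI : IsKleinFour A.range := ⟨hRcard, hRexp⟩
  let e0 : A.range ≃ M :=
    (Finite.equivFinOfCardEq hRcard).trans (Finite.equivFinOfCardEq hMcard).symm
  let e1 : A.range ≃ M := e0.trans (Equiv.mulLeft (e0 1)⁻¹)
  have he1 : e1 1 = 1 := by
    simp only [e1, Equiv.trans_apply, Equiv.coe_mulLeft]
    exact inv_mul_cancel _
  have hexpM : Monoid.exponent M = 2 := by
    show Monoid.exponent (Multiplicative (ZMod 2) × Multiplicative (ZMod 2)) = 2
    rw [Monoid.exponent_prod, Monoid.exponent_multiplicative, ZMod.exponent]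
    rfl
  let iso : A.range ≃* M := IsKleinFour.mulEquiv' e1 he1 hexpM
  refine ⟨?_, hnormal, iso.toMonoidHom.comp A.rangeRestrict,
    iso.surjective.comp A.rangeRestrict_surjective, ?_⟩
  · -- the Schreier generating set
    have hRT : Subgroup.IsComplement (Γ : Set P) (K : Set P) := by
      rw [Subgroup.isComplement_iff_existsUnique_mul_inv_mem]
      intro g
      have hRQcard : Nat.card (Quotient (QuotientGroup.rightRel Γ)) = 4 := by
        rw [Nat.card_congr (QuotientGroup.quotientRightRelEquivQuotientLeftRel Γ)]
        exact hQcard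
      have hRQfin : Finite (Quotient (QuotientGroup.rightRel Γ)) :=
        Nat.finite_of_card_ne_zero (by omega)
      set f : K → Quotient (QuotientGroup.rightRel Γ) :=
        fun k => Quotient.mk'' (k : P) with hf
      have hfinj : Function.Injective f := by
        intro k1 k2 h
        rw [hf] at h
        have hrel := Quotient.eq''.mp h
        rw [QuotientGroup.rightRel_apply] at hrel
        have hmem : ((k2 : P) * (k1 : P)⁻¹) ∈ K := K.mul_mem k2.2 (K.inv_mem k1.2)
        have := htor _ hrel (hKsq _ hmem)
        ext
        exact (mul_inv_eq_one.mp this).symm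
      have hfbij : Function.Bijective f :=
        (Nat.bijective_iff_injective_and_card f).mpr ⟨hfinj, by rw [hKcard, hRQcard]⟩
      obtain ⟨k, hk⟩ := hfbij.2 (Quotient.mk'' g)
      have hgk : g * (k : P)⁻¹ ∈ Γ := by
        have := Quotient.eq''.mp hk
        rwa [QuotientGroup.rightRel_apply] at this
      refine ⟨⟨(k : P), k.2⟩, hgk, ?_⟩
      rintro ⟨s, hs⟩ hgs
      have hmem : (s * (k : P)⁻¹) ∈ K := K.mul_mem hs (K.inv_mem k.2)
      have hprod : s * (k : P)⁻¹ ∈ Γ := by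
        have : (g * s⁻¹)⁻¹ * (g * (k : P)⁻¹) = s * (k : P)⁻¹ := by group
        rw [← this]
        exact Γ.mul_mem (Γ.inv_mem hgs) hgk
      have := htor _ hprod (hKsq _ hmem)
      exact Subtype.ext (mul_inv_eq_one.mp this)
    have hSch := Subgroup.closure_mul_image_eq hRT K.one_mem hT2
    refine ⟨_, ?_, hSch⟩
    rintro u ⟨g, hg, rfl⟩
    rw [Set.mem_mul] at hg
    obtain ⟨k, hk, t, ht, rfl⟩ := hg
    set r : P := (hRT.toRightFun (k * t) : P) with hr
    have hrK : r ∈ K := (hRT.toRightFun (k * t)).2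
    refine ⟨k * r⁻¹, K.mul_mem hk (K.inv_mem hrK), r * t * r⁻¹, ?_, by rw [hr]; group⟩
    have : (r * t * r⁻¹) * (r * t * r⁻¹) = r * (t * t) * r⁻¹ := by group
    rw [this, hT1 t ht, mul_one, mul_inv_cancel]
  · ext g
    rw [MonoidHom.mem_ker, MonoidHom.comp_apply]
    constructor
    · intro h
      have h2 : A.rangeRestrict g = 1 := iso.injective (by rw [map_one]; simpa using h)
      have h3 : g ∈ A.ker := by
        rw [← MonoidHom.ker_rangeRestrict A, MonoidHom.mem_ker]; exact h2
      rwa [hker] at h3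
    · intro h
      have h3 : A.rangeRestrict g = 1 := by
        rw [← MonoidHom.mem_ker, MonoidHom.ker_rangeRestrict, hker]; exact h
      rw [h3, map_one]
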